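/- Let G be a finite simple graph with χ(G) > ω(G), and let K be a clique of G. If the set C(K) of common neighbors of all vertices of K is itself a clique (K is 'dense'), then χ(G \ K) ≥ χ(G) − |K| + 1 (K is Tihany). -/

import Mathlib

open SimpleGraph

/-- The set of common neighbors, outside `K`, of all vertices of `K`. -/
def commonNbrs {V : Type*} (G : SimpleGraph V) (K : Set V) : Set V :=
  {x | x ∉ K ∧ ∀ u ∈ K, G.Adj x u}

section Helper

variable {V : Type*} [Fintype V] [DecidableEq V] (G : SimpleGraph V)

/-- `f` is a proper coloring of the subgraph induced on `A`, with colors `< c`. -/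
def colOn (A : Finset V) (c : ℕ) : Prop :=
  ∃ f : V → ℕ, (∀ v ∈ A, f v < c) ∧ ∀ u ∈ A, ∀ v ∈ A, G.Adj u v → f u ≠ f v

theorem colOn_mono {A : Finset V} {c d : ℕ} (hcd : c ≤ d) (h : colOn G A c) :
    colOn G A d := by
  obtain ⟨f, hb, hp⟩ := h
  exact ⟨f, fun v hv => lt_of_lt_of_le (hb v hv) hcd, hp⟩

theorem colOn_card (A : Finset V) : colOn G A A.card := by
  classical
  have e : ↥A ≃ Fin A.card := Fintype.equivFinOfCardEq (Fintype.card_coe A)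
  refine ⟨fun v => if h : v ∈ A then (e ⟨v, h⟩ : ℕ) else 0, ?_, ?_⟩
  · intro v hv; simp only [dif_pos hv]; exact (e ⟨v, hv⟩).2
  · intro u hu v hv hadj
    simp only [dif_pos hu, dif_pos hv]
    intro hval
    apply G.ne_of_adj hadj
    have : e ⟨u, hu⟩ = e ⟨v, hv⟩ := Fin.ext hval
    simpa using e.injective this

theorem colOn_exists (A : Finset V) : ∃ c, colOn G A c := ⟨A.card, colOn_card G A⟩

/-- Minimum number of colors needed for the subgraph induced on `A`. -/
noncomputable def chromOn (A : Finset V) : ℕ := sInf {c | colOn G A c}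

theorem colOn_chromOn (A : Finset V) : colOn G A (chromOn G A) :=
  Nat.sInf_mem (colOn_exists G A)

theorem chromOn_le {A : Finset V} {c : ℕ} (h : colOn G A c) : chromOn G A ≤ c :=
  Nat.sInf_le h

/-- Maximum size of a clique contained in `A`. -/
noncomputable def maxCliqueOn (A : Finset V) : ℕ :=
  sSup {n | ∃ Q : Finset V, Q ⊆ A ∧ G.IsClique (Q : Set V) ∧ Q.card = n}

theorem maxCliqueOn_spec (A : Finset V) :
    ∃ Q : Finset V, Q ⊆ A ∧ G.IsClique (Q : Set V) ∧ Q.card = maxCliqueOn G A := by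
  have hne : {n | ∃ Q : Finset V, Q ⊆ A ∧ G.IsClique (Q : Set V) ∧ Q.card = n}.Nonempty :=
    ⟨0, ∅, Finset.empty_subset _, by simpa using G.isClique_empty, Finset.card_empty⟩
  have hbdd : BddAbove {n | ∃ Q : Finset V, Q ⊆ A ∧ G.IsClique (Q : Set V) ∧ Q.card = n} := by
    refine ⟨A.card, fun n hn => ?_⟩
    obtain ⟨Q, hQA, _, hQc⟩ := hn
    exact hQc ▸ Finset.card_le_card hQA
  exact Nat.sSup_mem hne hbdd

theorem le_maxCliqueOn {A Q : Finset V} (hQA : Q ⊆ A) (hQ : G.IsClique (Q : Set V)) :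
    Q.card ≤ maxCliqueOn G A := by
  have hbdd : BddAbove {n | ∃ Q : Finset V, Q ⊆ A ∧ G.IsClique (Q : Set V) ∧ Q.card = n} := by
    refine ⟨A.card, fun n hn => ?_⟩
    obtain ⟨Q', hQ'A, _, hQ'c⟩ := hn
    exact hQ'c ▸ Finset.card_le_card hQ'A
  exact le_csSup hbdd ⟨Q, hQA, hQ, rfl⟩

theorem helper (A : Finset V) :
    ∀ K C : Finset V, K ⊆ A → G.IsClique (K : Set V) →
    (∀ x, x ∈ C ↔ x ∈ A ∧ x ∉ K ∧ ∀ u ∈ K, G.Adj x u) → G.IsClique (C : Set V) →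
    colOn G A (max (maxCliqueOn G A) (chromOn G (A \ K) + K.card - 1)) := by
  induction A using Finset.strongInduction with
  | _ A ih =>
  intro K C hKA hK hCdef hCcl
  set k := K.card with hkdef
  set c := chromOn G (A \ K) with hcdef
  set b := maxCliqueOn G A with hbdef
  -- enumeration of K
  have eK : ↥K ≃ Fin k := Fintype.equivFinOfCardEq (Fintype.card_coe K)
  obtain ⟨φ, hφb, hφp⟩ := colOn_chromOn G (A \ K)
  simp only [← hcdef] at hφb
  clear_value k c b
  -- basic clique facts
  have hkb : k ≤ b := by rw [hkdef, hbdef]; exact le_maxCliqueOn G hKA hK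
  have hKCdisj : ∀ x ∈ C, x ∉ K := fun x hx => ((hCdef x).1 hx).2.1
  have hKCclique : G.IsClique ((K ∪ C : Finset V) : Set V) := by
    intro x hx y hy hxy
    simp only [Finset.coe_union, Set.mem_union, Finset.mem_coe] at hx hy
    rcases hx with hx | hx <;> rcases hy with hy | hy
    · exact hK hx hy hxy
    · exact (((hCdef y).1 hy).2.2 x hx).symm
    · exact ((hCdef x).1 hx).2.2 y hy
    · exact hCcl hx hy hxy
  have hKCb : k + C.card ≤ b := by
    have hsub : K ∪ C ⊆ A := by
      intro x hx
      rcases Finset.mem_union.mp hx with hx | hx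
      · exact hKA hx
      · exact ((hCdef x).1 hx).1
    have := le_maxCliqueOn G hsub hKCclique
    rw [Finset.card_union_of_disjoint (Finset.disjoint_left.mpr
      (fun x hx => fun hxC => hKCdisj x hxC hx))] at this
    omega
  -- the trivial coloring with c + k colors
  have hck : colOn G A (c + k) := by
    refine ⟨fun v => if h : v ∈ K then c + (eK ⟨v, h⟩ : ℕ) else φ v, ?_, ?_⟩
    · intro v hv
      by_cases h : v ∈ K
      · simp only [dif_pos h]
        have := (eK ⟨v, h⟩).2
        omega
      · simp only [dif_neg h]
        have := hφb v (Finset.mem_sdiff.mpr ⟨hv, h⟩)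
        omega
    · intro u hu v hv hadj
      by_cases h1 : u ∈ K <;> by_cases h2 : v ∈ K
      · simp only [dif_pos h1, dif_pos h2]
        intro hval
        apply G.ne_of_adj hadj
        have : eK ⟨u, h1⟩ = eK ⟨v, h2⟩ := Fin.ext (by omega)
        simpa using eK.injective this
      · simp only [dif_pos h1, dif_neg h2]
        have := hφb v (Finset.mem_sdiff.mpr ⟨hv, h2⟩)
        omega
      · simp only [dif_neg h1, dif_pos h2]
        have := hφb u (Finset.mem_sdiff.mpr ⟨hu, h1⟩)
        omega
      · simp only [dif_neg h1, dif_neg h2]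
        exact hφp u (Finset.mem_sdiff.mpr ⟨hu, h1⟩) v (Finset.mem_sdiff.mpr ⟨hv, h2⟩) hadj
  by_cases hbc : c + k ≤ b
  · exact colOn_mono G (le_trans hbc (le_max_left _ _)) hck
  -- now b ≤ c + k - 1
  push_neg at hbc
  rcases Nat.eq_zero_or_pos k with hk0 | hk1
  · -- k = 0 : C = A, so A is a clique and b ≥ |A| ≥ c, contradiction with hbc
    exfalso
    have hKemp : K = ∅ := Finset.card_eq_zero.mp (by omega)
    have hCA : A ⊆ C := by
      intro x hx
      rw [hCdef]
      refine ⟨hx, ?_, ?_⟩ <;> simp [hKemp]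
    have hcA : c ≤ A.card := by
      have : colOn G (A \ K) A.card := by
        have := colOn_card G (A \ K)
        exact colOn_mono G (Finset.card_le_card (Finset.sdiff_subset)) this
      rw [hcdef]
      exact chromOn_le G this
    have : k + C.card ≤ b := hKCb
    have hAC : A.card ≤ C.card := Finset.card_le_card hCA
    omega
  -- k ≥ 1, b ≤ c + k - 1, hence |C| ≤ c - 1 and c ≥ 1
  have hCc : C.card ≤ c - 1 := by omega
  have hc1 : 1 ≤ c := by omega
  -- reduce goal to colOn G A (c + k - 1)
  have hgoal : colOn G A (c + k - 1) → colOn G A (max b (c + k - 1)) :=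
    fun h => colOn_mono G (le_max_right _ _) h
  apply hgoal
  by_cases hc2 : 2 ≤ c ∨ C.Nonempty
  · -- main recursive case; first, 2 ≤ c holds
    have hc22 : 2 ≤ c := by
      rcases hc2 with h | h
      · exact h
      · have := Finset.card_pos.mpr h
        omega
    -- all colors are used by φ
    have hused : ∀ j, j < c → ∃ w ∈ A \ K, φ w = j := by
      by_contra hcon
      push_neg at hcon
      obtain ⟨j, hjc, hjun⟩ := hcon
      have : colOn G (A \ K) (c - 1) := by
        refine ⟨fun v => if φ v = c - 1 then j else φ v, ?_, ?_⟩
        · intro v hv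
          by_cases h : φ v = c - 1
          · simp only [if_pos h]
            have : φ v ≠ j := hjun v hv
            omega
          · simp only [if_neg h]
            have := hφb v hv
            omega
        · intro u hu v hv hadj
          have hne := hφp u hu v hv hadj
          have hju := hjun u hu
          have hjv := hjun v hv
          by_cases h1 : φ u = c - 1 <;> by_cases h2 : φ v = c - 1 <;>
            simp only [if_pos, if_neg, h1, h2, if_true, if_false] <;> omega
      have := chromOn_le G this
      omega
    -- choose the color j
    obtain ⟨j, hjc, hjspec⟩ : ∃ j, j < c ∧ ∀ r ∈ C, φ r ≠ j → ∃ x ∈ C, φ x = j := by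
      rcases Finset.eq_empty_or_nonempty C with hCe | ⟨x, hxC⟩
      · exact ⟨0, by omega, fun r hr => absurd hr (by simp [hCe])⟩
      · have hxAK : x ∈ A \ K :=
          Finset.mem_sdiff.mpr ⟨((hCdef x).1 hxC).1, ((hCdef x).1 hxC).2.1⟩
        exact ⟨φ x, hφb x hxAK, fun r _ _ => ⟨x, hxC, rfl⟩⟩
    -- the color class of j
    set Vj : Finset V := (A \ K).filter (fun w => φ w = j) with hVjdef
    have hVjsub : Vj ⊆ A := le_trans (Finset.filter_subset _ _) (Finset.sdiff_subset)
    have hVjne : Vj.Nonempty := by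
      obtain ⟨w, hw, hwj⟩ := hused j hjc
      exact ⟨w, Finset.mem_filter.mpr ⟨hw, hwj⟩⟩
    have hVjK : ∀ v ∈ K, v ∉ Vj := by
      intro v hv hvVj
      exact (Finset.mem_sdiff.mp (Finset.mem_filter.mp hvVj).1).2 hv
    set A' : Finset V := A \ Vj with hA'def
    have hA'ss : A' ⊂ A := Finset.sdiff_ssubset hVjsub hVjne
    have hKA' : K ⊆ A' := fun v hv => Finset.mem_sdiff.mpr ⟨hKA hv, hVjK v hv⟩
    set C' : Finset V := C.filter (fun x => x ∉ Vj) with hC'def2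
    have hC'def : ∀ x, x ∈ C' ↔ x ∈ A' ∧ x ∉ K ∧ ∀ u ∈ K, G.Adj x u := by
      intro x
      simp only [hC'def2, Finset.mem_filter, hA'def, Finset.mem_sdiff, hCdef]
      tauto
    have hC'cl : G.IsClique (C' : Set V) := by
      apply hCcl.subset
      intro x hx
      simp only [Finset.mem_coe, hC'def2, Finset.mem_filter] at hx ⊢
      exact hx.1
    -- apply induction hypothesis
    have IH := ih A' hA'ss K C' hKA' hK hC'def hC'cl
    rw [← hkdef] at IH
    set b' := maxCliqueOn G A' with hb'def
    set c' := chromOn G (A' \ K) with hc'def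
    -- c' ≤ c - 1
    have hc' : c' ≤ c - 1 := by
      rw [hc'def]
      apply chromOn_le
      refine ⟨fun v => if φ v = c - 1 then j else φ v, ?_, ?_⟩
      · intro v hv
        have hvAK : v ∈ A \ K := by
          have := Finset.mem_sdiff.mp hv
          exact Finset.mem_sdiff.mpr ⟨(Finset.mem_sdiff.mp this.1).1, this.2⟩
        have hvj : φ v ≠ j := by
          intro h
          exact (Finset.mem_sdiff.mp (Finset.mem_sdiff.mp hv).1).2
            (Finset.mem_filter.mpr ⟨hvAK, h⟩)
        have hb := hφb v hvAK
        by_cases h : φ v = c - 1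
        · simp only [if_pos h]
          omega
        · simp only [if_neg h]
          omega
      · intro u hu v hv hadj
        have huAK : u ∈ A \ K := by
          have := Finset.mem_sdiff.mp hu
          exact Finset.mem_sdiff.mpr ⟨(Finset.mem_sdiff.mp this.1).1, this.2⟩
        have hvAK : v ∈ A \ K := by
          have := Finset.mem_sdiff.mp hv
          exact Finset.mem_sdiff.mpr ⟨(Finset.mem_sdiff.mp this.1).1, this.2⟩
        have huj : φ u ≠ j := by
          intro h
          exact (Finset.mem_sdiff.mp (Finset.mem_sdiff.mp hu).1).2
            (Finset.mem_filter.mpr ⟨huAK, h⟩)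
        have hvj : φ v ≠ j := by
          intro h
          exact (Finset.mem_sdiff.mp (Finset.mem_sdiff.mp hv).1).2
            (Finset.mem_filter.mpr ⟨hvAK, h⟩)
        have hne := hφp u huAK v hvAK hadj
        by_cases h1 : φ u = c - 1 <;> by_cases h2 : φ v = c - 1 <;>
          simp only [if_pos, if_neg, h1, h2, if_true, if_false] <;> omega
    clear_value b' c'
    by_cases h4 : max b' (c' + k - 1) ≤ c + k - 2
    · -- extend the coloring of A' by one fresh color on Vj
      obtain ⟨f', hf'b, hf'p⟩ := colOn_mono G h4 IH
      refine ⟨fun v => if v ∈ Vj then c + k - 2 else f' v, ?_, ?_⟩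
      · intro v hv
        by_cases h : v ∈ Vj
        · simp only [if_pos h]; omega
        · simp only [if_neg h]
          have := hf'b v (Finset.mem_sdiff.mpr ⟨hv, h⟩)
          omega
      · intro u hu v hv hadj
        by_cases h1 : u ∈ Vj <;> by_cases h2 : v ∈ Vj
        · exfalso
          have hu' := Finset.mem_filter.mp h1
          have hv' := Finset.mem_filter.mp h2
          exact hφp u hu'.1 v hv'.1 hadj (hu'.2.trans hv'.2.symm)
        · simp only [if_pos h1, if_neg h2]
          have := hf'b v (Finset.mem_sdiff.mpr ⟨hv, h2⟩)
          omega
        · simp only [if_neg h1, if_pos h2]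
          have := hf'b u (Finset.mem_sdiff.mpr ⟨hu, h1⟩)
          omega
        · simp only [if_neg h1, if_neg h2]
          exact hf'p u (Finset.mem_sdiff.mpr ⟨hu, h1⟩) v (Finset.mem_sdiff.mpr ⟨hv, h2⟩) hadj
    · -- a large clique exists in A', contradiction
      exfalso
      push_neg at h4
      have hb' : c + k - 1 ≤ b' := by omega
      obtain ⟨Q, hQA', hQcl, hQcard⟩ := maxCliqueOn_spec G A'
      set R : Finset V := Q \ K with hRdef
      have hRAK : R ⊆ A \ K := by
        intro r hr
        have := Finset.mem_sdiff.mp hr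
        exact Finset.mem_sdiff.mpr
          ⟨(Finset.mem_sdiff.mp (hQA' this.1)).1, this.2⟩
      have hRnoj : ∀ r ∈ R, φ r ≠ j := by
        intro r hr hrj
        have hrA' := hQA' (Finset.mem_sdiff.mp hr).1
        exact (Finset.mem_sdiff.mp hrA').2 (Finset.mem_filter.mpr ⟨hRAK hr, hrj⟩)
      -- φ is injective on R with values in range c minus {j}
      have hRcard : R.card ≤ c - 1 := by
        have hinj : Set.InjOn φ ↑R := by
          intro r hr s hs hrs
          by_contra hne
          have hadj : G.Adj r s := hQcl
            (Finset.mem_coe.mpr ((Finset.sdiff_subset) (Finset.mem_coe.mp hr)))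
            (Finset.mem_coe.mpr ((Finset.sdiff_subset) (Finset.mem_coe.mp hs))) hne
          exact hφp r (hRAK (Finset.mem_coe.mp hr)) s (hRAK (Finset.mem_coe.mp hs)) hadj hrs
        have himg : R.image φ ⊆ (Finset.range c).erase j := by
          intro i hi
          obtain ⟨r, hr, hri⟩ := Finset.mem_image.mp hi
          refine Finset.mem_erase.mpr ⟨hri ▸ hRnoj r hr, Finset.mem_range.mpr ?_⟩
          exact hri ▸ hφb r (hRAK hr)
        have h1 : R.card = (R.image φ).card := (Finset.card_image_of_injOn hinj).symm
        have h2 : ((Finset.range c).erase j).card = c - 1 := by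
          rw [Finset.card_erase_of_mem (Finset.mem_range.mpr hjc), Finset.card_range]
        calc R.card = (R.image φ).card := h1
          _ ≤ ((Finset.range c).erase j).card := Finset.card_le_card himg
          _ = c - 1 := h2
      have hQK : (Q ∩ K).card + R.card = Q.card := by
        rw [hRdef]
        exact Finset.card_inter_add_card_sdiff Q K
      have hKQ : K ⊆ Q := by
        have h1 : K.card ≤ (Q ∩ K).card := by omega
        have h2 : Q ∩ K = K := Finset.eq_of_subset_of_card_le (Finset.inter_subset_right) h1
        exact fun v hv => Finset.mem_of_mem_inter_left (h2.symm ▸ hv : v ∈ Q ∩ K)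
      have hRC : R ⊆ C := by
        intro r hr
        rw [hCdef]
        have hrQ := (Finset.mem_sdiff.mp hr).1
        have hrK := (Finset.mem_sdiff.mp hr).2
        refine ⟨(Finset.mem_sdiff.mp (hRAK hr)).1, hrK, ?_⟩
        intro u hu
        have hne : r ≠ u := fun h => hrK (h ▸ hu)
        exact hQcl (Finset.mem_coe.mpr hrQ) (Finset.mem_coe.mpr (hKQ hu)) hne
      have hQKeq : (Q ∩ K).card = k := by
        rw [Finset.inter_eq_right.mpr hKQ, hkdef]
      have hRcard2 : c - 1 ≤ R.card := by omega
      have hRne : R.Nonempty := Finset.card_pos.mp (by omega)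
      obtain ⟨r, hr⟩ := hRne
      obtain ⟨x, hxC, hxj⟩ := hjspec r (hRC hr) (hRnoj r hr)
      have hxR : x ∉ R := fun h => hRnoj x h hxj
      have hRsub : R ⊆ C.erase x :=
        fun s hs => Finset.mem_erase.mpr ⟨fun h => hxR (h ▸ hs), hRC hs⟩
      have := Finset.card_le_card hRsub
      rw [Finset.card_erase_of_mem hxC] at this
      omega
  · -- degenerate case : c = 1 and C = ∅
    push_neg at hc2
    obtain ⟨hcle, hCe⟩ := hc2
    have hceq : c = 1 := by omega
    have hCemp : C = ∅ := hCe
    -- A \ K is edgeless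
    have hedgeless : ∀ u ∈ A \ K, ∀ v ∈ A \ K, ¬ G.Adj u v := by
      intro u hu v hv hadj
      have h1 := hφb u hu
      have h2 := hφb v hv
      exact hφp u hu v hv hadj (by omega)
    -- every vertex of A \ K has a non-neighbor in K
    have hnonnbr : ∀ w, w ∈ A \ K → ∃ u, u ∈ K ∧ ¬ G.Adj w u := by
      intro w hw
      have hwC : w ∉ C := by rw [hCemp]; exact Finset.notMem_empty w
      rw [hCdef] at hwC
      push_neg at hwC
      obtain ⟨u, hu, hnadj⟩ := hwC (Finset.mem_sdiff.mp hw).1 (Finset.mem_sdiff.mp hw).2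
      exact ⟨u, hu, hnadj⟩
    have hch : ∀ w : V, ∃ u : V, w ∈ A \ K → u ∈ K ∧ ¬ G.Adj w u := by
      intro w
      by_cases h : w ∈ A \ K
      · obtain ⟨u, hu, hnadj⟩ := hnonnbr w h
        exact ⟨u, fun _ => ⟨hu, hnadj⟩⟩
      · exact ⟨w, fun h' => absurd h' h⟩
    choose uf huf using hch
    have hbnd : c + k - 1 = k := by omega
    rw [hbnd]
    refine ⟨fun v => if h : v ∈ K then (eK ⟨v, h⟩ : ℕ)
      else if h2 : v ∈ A \ K then (eK ⟨uf v, (huf v h2).1⟩ : ℕ) else 0, ?_, ?_⟩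
    · intro v hv
      by_cases h : v ∈ K
      · simp only [dif_pos h]
        exact (eK ⟨v, h⟩).2
      · have hv2 : v ∈ A \ K := Finset.mem_sdiff.mpr ⟨hv, h⟩
        simp only [dif_neg h, dif_pos hv2]
        exact (eK ⟨uf v, (huf v hv2).1⟩).2
    · intro u hu v hv hadj
      by_cases h1 : u ∈ K <;> by_cases h2 : v ∈ K
      · simp only [dif_pos h1, dif_pos h2]
        intro hval
        apply G.ne_of_adj hadj
        have : eK ⟨u, h1⟩ = eK ⟨v, h2⟩ := Fin.ext hval
        simpa using eK.injective this
      · have hv2 : v ∈ A \ K := Finset.mem_sdiff.mpr ⟨hv, h2⟩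
        simp only [dif_pos h1, dif_neg h2, dif_pos hv2]
        intro hval
        have : eK ⟨u, h1⟩ = eK ⟨uf v, (huf v hv2).1⟩ := Fin.ext hval
        have huu : u = uf v := by simpa using eK.injective this
        exact (huf v hv2).2 (huu ▸ hadj.symm)
      · have hu2 : u ∈ A \ K := Finset.mem_sdiff.mpr ⟨hu, h1⟩
        simp only [dif_neg h1, dif_pos h2, dif_pos hu2]
        intro hval
        have : eK ⟨uf u, (huf u hu2).1⟩ = eK ⟨v, h2⟩ := Fin.ext hval
        have huu : uf u = v := by simpa using eK.injective this
        exact (huf u hu2).2 (huu ▸ hadj)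
      · exact absurd hadj (hedgeless u (Finset.mem_sdiff.mpr ⟨hu, h1⟩)
          v (Finset.mem_sdiff.mpr ⟨hv, h2⟩))

end Helper

/-- If `χ(G) > ω(G)` and `K` is a dense clique (its common neighborhood is a clique),
then `K` is Tihany: `χ(G \ K) ≥ χ(G) - |K| + 1`. -/
theorem stmt1 {V : Type*} [Fintype V] (G : SimpleGraph V)
    (hχω : (G.cliqueNum : ℕ∞) < G.chromaticNumber)
    (K : Finset V) (hK : G.IsClique (↑K : Set V))
    (hdense : G.IsClique (commonNbrs G (↑K : Set V))) :
    G.chromaticNumber - (K.card : ℕ∞) + 1 ≤ (G.induce ((↑K : Set V)ᶜ)).chromaticNumber := by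
  classical
  set k := K.card with hkdef
  -- the common-neighbor finset
  set Cf : Finset V := Finset.univ.filter (fun x => x ∉ K ∧ ∀ u ∈ K, G.Adj x u) with hCfdef
  have hCdef : ∀ x, x ∈ Cf ↔ x ∈ (Finset.univ : Finset V) ∧ x ∉ K ∧ ∀ u ∈ K, G.Adj x u := by
    intro x; simp [hCfdef]
  have hCcl : G.IsClique (Cf : Set V) := by
    apply hdense.subset
    intro x hx
    rw [Finset.mem_coe, hCdef] at hx
    exact ⟨fun h => hx.2.1 (Finset.mem_coe.mp h), fun u hu => hx.2.2 u (Finset.mem_coe.mp hu)⟩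
  have H := helper G Finset.univ K Cf (Finset.subset_univ K) hK hCdef hCcl
  set b := maxCliqueOn G Finset.univ with hbdef
  set c := chromOn G (Finset.univ \ K) with hcdef
  -- b is at most the clique number
  have hbω : b ≤ G.cliqueNum := by
    obtain ⟨Q, _, hQcl, hQcard⟩ := maxCliqueOn_spec G (Finset.univ : Finset V)
    rw [hbdef, ← hQcard]
    exact SimpleGraph.IsClique.card_le_cliqueNum (tc := hQcl)
  -- colOn univ gives a coloring of G
  have hcol : G.Colorable (max b (c + k - 1)) := by
    obtain ⟨f, hfb, hfp⟩ := H
    exact ⟨Coloring.mk (fun v => ⟨f v, hfb v (Finset.mem_univ v)⟩)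
      (fun {u w} hadj h => hfp u (Finset.mem_univ u) w (Finset.mem_univ w) hadj
        (congrArg Fin.val h))⟩
  have hle : G.chromaticNumber ≤ ((max b (c + k - 1) : ℕ) : ℕ∞) := hcol.chromaticNumber_le
  have hle2 : G.chromaticNumber ≤ ((c + k - 1 : ℕ) : ℕ∞) := by
    rcases max_cases b (c + k - 1) with ⟨hm, hmb⟩ | ⟨hm, hmb⟩
    · exfalso
      rw [hm] at hle
      have h1 : G.chromaticNumber ≤ (G.cliqueNum : ℕ∞) :=
        le_trans hle (by exact_mod_cast hbω)
      exact absurd (lt_of_lt_of_le hχω h1) (lt_irrefl _)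
    · rwa [hm] at hle
  -- chromatic numbers are finite
  have hGfin : G.chromaticNumber ≠ ⊤ :=
    (lt_of_le_of_lt (G.colorable_of_fintype.chromaticNumber_le) (WithTop.coe_lt_top _)).ne
  set a := G.chromaticNumber.toNat with hadef
  have ha : G.chromaticNumber = (a : ℕ∞) := (ENat.coe_toNat hGfin).symm
  have hindfin : (G.induce ((↑K : Set V)ᶜ)).chromaticNumber ≠ ⊤ :=
    (lt_of_le_of_lt ((G.induce ((↑K : Set V)ᶜ)).colorable_of_fintype.chromaticNumber_le)
      (WithTop.coe_lt_top _)).ne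
  set n := (G.induce ((↑K : Set V)ᶜ)).chromaticNumber.toNat with hndef
  have hn : (G.induce ((↑K : Set V)ᶜ)).chromaticNumber = (n : ℕ∞) :=
    (ENat.coe_toNat hindfin).symm
  -- c ≤ n : a coloring of the induced graph gives colOn on univ \ K
  have hcn : c ≤ n := by
    obtain ⟨Cg⟩ := (G.induce ((↑K : Set V)ᶜ)).colorable_chromaticNumber_of_fintype
    rw [hcdef]
    apply chromOn_le
    refine ⟨fun v => if h : v ∈ ((↑K : Set V)ᶜ) then (Cg ⟨v, h⟩ : ℕ) else 0, ?_, ?_⟩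
    · intro v hv
      have h : v ∈ ((↑K : Set V)ᶜ) := by
        simp only [Set.mem_compl_iff, Finset.mem_coe]
        exact (Finset.mem_sdiff.mp hv).2
      simp only [dif_pos h]
      exact (Cg ⟨v, h⟩).2
    · intro u hu v hv hadj
      have h1 : u ∈ ((↑K : Set V)ᶜ) := by
        simp only [Set.mem_compl_iff, Finset.mem_coe]
        exact (Finset.mem_sdiff.mp hu).2
      have h2 : v ∈ ((↑K : Set V)ᶜ) := by
        simp only [Set.mem_compl_iff, Finset.mem_coe]
        exact (Finset.mem_sdiff.mp hv).2
      simp only [dif_pos h1, dif_pos h2]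
      intro hval
      have hadj' : (G.induce ((↑K : Set V)ᶜ)).Adj ⟨u, h1⟩ ⟨v, h2⟩ := by
        simp only [comap_adj, Function.Embedding.coe_subtype]
        exact hadj
      exact Cg.valid hadj' (Fin.ext hval)
  -- c ≥ 1, else K = univ and the graph is complete
  have hc1 : 1 ≤ c := by
    by_contra hc0
    push_neg at hc0
    interval_cases c
    · obtain ⟨f, hfb, _⟩ := colOn_chromOn G (Finset.univ \ K)
      rw [← hcdef] at hfb
      have hKuniv : (Finset.univ : Finset V) \ K = ∅ := by
        by_contra hne
        obtain ⟨v, hv⟩ := Finset.nonempty_of_ne_empty hne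
        exact absurd (hfb v hv) (by omega)
      have hKeq : K = Finset.univ := by
        have := Finset.sdiff_eq_empty_iff_subset.mp hKuniv
        exact Finset.eq_univ_iff_forall.mpr (fun v => this (Finset.mem_univ v))
      have hωcard : Fintype.card V ≤ G.cliqueNum := by
        have : K.card ≤ G.cliqueNum := SimpleGraph.IsClique.card_le_cliqueNum (tc := hK)
        rwa [hKeq, Finset.card_univ] at this
      have hχcard : G.chromaticNumber ≤ (Fintype.card V : ℕ∞) :=
        G.colorable_of_fintype.chromaticNumber_le
      have : G.chromaticNumber ≤ (G.cliqueNum : ℕ∞) :=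
        le_trans hχcard (by exact_mod_cast hωcard)
      exact absurd (lt_of_lt_of_le hχω this) (lt_irrefl _)
  -- final arithmetic
  have han : a ≤ c + k - 1 := by
    rw [ha] at hle2
    exact_mod_cast hle2
  rw [ha, hn]
  have hfinal : a - k + 1 ≤ n := by omega
  calc (a : ℕ∞) - (k : ℕ∞) + 1 = ((a - k : ℕ) : ℕ∞) + ((1 : ℕ) : ℕ∞) := by
        rw [ENat.coe_sub]; norm_num
    _ = ((a - k + 1 : ℕ) : ℕ∞) := by rw [← ENat.coe_add]
    _ ≤ (n : ℕ∞) := by exact_mod_cast hfinal
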